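/- Let g, h : A* → Σ* be marked morphisms such that the set of minimal elements of the coincidence set I(g,h) is exactly i(g,h) = {(e,f), (e',f')} with (e,f) ≠ (e',f'). Define the successor morphisms g₁, h₁ : A* → A* by g₁(a) = e, g₁(b) = e', h₁(a) = f, h₁(b) = f'. Then g₁ and h₁ are marked, and for every w ∈ E(g,h) there is a unique word w₁ ∈ A* such that g₁(w₁) = h₁(w₁) = w (in particular w₁ ∈ E(g₁,h₁)). -/

import Mathlib

/-- The two-letter alphabet `A = {a, b}`. -/
inductive Ltr : Type
  | a : Ltr
  | b : Ltr
  deriving DecidableEq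

/-- Apply a morphism (given by the images of the letters) to a word. -/
def mapp {α σ : Type*} (g : α → List σ) (w : List α) : List σ :=
  (w.map g).flatten

/-- The `n`-th power `tⁿ` of a word `t`. -/
def npow {σ : Type*} (t : List σ) (n : ℕ) : List σ :=
  (List.replicate n t).flatten

/-- A binary morphism is periodic if all images of letters are powers of a common word. -/
def Periodic {σ : Type*} (g : Ltr → List σ) : Prop :=
  ∃ t : List σ, ∀ x : Ltr, ∃ n : ℕ, g x = npow t n

/-- The equality set `E(g,h)`. -/
def EqSet {σ : Type*} (g h : Ltr → List σ) : Set (List Ltr) :=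
  {u | mapp g u = mapp h u}

/-- `u` is a minimal element of `E(g,h)`: nonempty, in `E(g,h)`, and not a product of two
nonempty elements of `E(g,h)`. -/
def MinEl {σ : Type*} (g h : Ltr → List σ) (u : List Ltr) : Prop :=
  u ≠ [] ∧ u ∈ EqSet g h ∧
    ∀ v w : List Ltr, v ≠ [] → w ≠ [] → v ∈ EqSet g h → w ∈ EqSet g h → u ≠ v ++ w

/-- The submonoid of the free monoid generated by a set `S` of words. -/
def gen {α : Type*} (S : Set (List α)) : Set (List α) :=
  {u | ∃ l : List (List α), (∀ v ∈ l, v ∈ S) ∧ u = l.flatten}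

/-- A binary morphism is marked if the images of the two letters are nonempty and
begin with different letters. -/
def Marked {σ : Type*} (g : Ltr → List σ) : Prop :=
  g Ltr.a ≠ [] ∧ g Ltr.b ≠ [] ∧ (g Ltr.a).head? ≠ (g Ltr.b).head?

open Classical in
/-- Longest common prefix of two words. -/
noncomputable def lcp {σ : Type*} : List σ → List σ → List σ
  | x :: xs, y :: ys => if x = y then x :: lcp xs ys else []
  | _, _ => []

/-- `z_h`: the longest common prefix of `h(ab)` and `h(ba)`. -/
noncomputable def zh {σ : Type*} (h : Ltr → List σ) : List σ :=
  lcp (h Ltr.a ++ h Ltr.b) (h Ltr.b ++ h Ltr.a)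

/-- `z̄_h`: the longest common suffix of `h(ab)` and `h(ba)`. -/
noncomputable def zbar {σ : Type*} (h : Ltr → List σ) : List σ :=
  (lcp (h Ltr.a ++ h Ltr.b).reverse ((h Ltr.b ++ h Ltr.a).reverse)).reverse

/-- Componentwise concatenation in `Δ* × Δ*`. -/
def pprod {α : Type*} (p q : List α × List α) : List α × List α :=
  (p.1 ++ q.1, p.2 ++ q.2)

/-- The coincidence set `I(g,h) = {(u,v) | g(u) = h(v)}`. -/
def CoinSet {α σ : Type*} (g h : α → List σ) : Set (List α × List α) :=
  {p | mapp g p.1 = mapp h p.2}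

/-- Minimal elements of the coincidence set: elements other than `(ε,ε)` that are not
a product of two elements of `I(g,h) \ {(ε,ε)}`. -/
def MinCoin {α σ : Type*} (g h : α → List σ) (p : List α × List α) : Prop :=
  p ≠ ([], []) ∧ p ∈ CoinSet g h ∧
    ¬ ∃ q r : List α × List α, q ≠ ([], []) ∧ r ≠ ([], []) ∧
      q ∈ CoinSet g h ∧ r ∈ CoinSet g h ∧ p = pprod q r

/-- `(e,f)` is a block of `(g,h)`: nonempty words with `z_h·g(e) = h(f)·z_h`, minimal
with this property. -/
def MinBlock {σ : Type*} (g h : Ltr → List σ) (e f : List Ltr) : Prop :=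
  e ≠ [] ∧ f ≠ [] ∧ zh h ++ mapp g e = mapp h f ++ zh h ∧
    ∀ u v : List Ltr, u <+: e → v <+: f →
      zh h ++ mapp g u = mapp h v ++ zh h → (u = [] ∧ v = []) ∨ (u = e ∧ v = f)

/-- `e` is a nonempty word with `z_h·g(e) = h(e)·z_h`, minimal with this property. -/
def MinEqBlock {σ : Type*} (g h : Ltr → List σ) (e : List Ltr) : Prop :=
  e ≠ [] ∧ zh h ++ mapp g e = mapp h e ++ zh h ∧
    ∀ e₁ : List Ltr, e₁ <+: e → zh h ++ mapp g e₁ = mapp h e₁ ++ zh h →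
      e₁ = [] ∨ e₁ = e

/-- The binary morphism sending `a ↦ x` and `b ↦ y`. -/
def two {σ : Type*} (x y : List σ) : Ltr → List σ
  | Ltr.a => x
  | Ltr.b => y

/-- A counterexample: the minimal generating set of `E(g,h)` has at least two elements,
`g` is marked, `h` is not marked, `|g(a)| > |h(a)|` and `|g(b)| < |h(b)|`. -/
def Counterexample {σ : Type*} (g h : Ltr → List σ) : Prop :=
  (∃ α β : List Ltr, MinEl g h α ∧ MinEl g h β ∧ α ≠ β) ∧
  Marked g ∧ ¬ Marked h ∧
  (h Ltr.a).length < (g Ltr.a).length ∧ (g Ltr.b).length < (h Ltr.b).length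


section Aux

variable {σ : Type*}

theorem mapp_nil {g : Ltr → List σ} : mapp g [] = [] := rfl

theorem mapp_cons {g : Ltr → List σ} {x : Ltr} {u : List Ltr} :
    mapp g (x :: u) = g x ++ mapp g u := by simp [mapp]

theorem mapp_append {g : Ltr → List σ} {u v : List Ltr} :
    mapp g (u ++ v) = mapp g u ++ mapp g v := by simp [mapp]

theorem Marked.ne_nil {g : Ltr → List σ} (hg : Marked g) (x : Ltr) : g x ≠ [] := by
  cases x
  · exact hg.1
  · exact hg.2.1

theorem Marked.head_ne {g : Ltr → List σ} (hg : Marked g) {x y : Ltr} (h : x ≠ y) :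
    (g x).head? ≠ (g y).head? := by
  cases x <;> cases y <;> first | exact absurd rfl h | exact hg.2.2 | exact (Ne.symm hg.2.2)

theorem mapp_eq_nil {g : Ltr → List σ} (hg : Marked g) {u : List Ltr}
    (h : mapp g u = []) : u = [] := by
  cases u with
  | nil => rfl
  | cons x t =>
    rw [mapp_cons, List.append_eq_nil_iff] at h
    exact absurd h.1 (hg.ne_nil x)

theorem prefix_head? {l₁ l₂ : List σ} (h : l₁ <+: l₂) (hne : l₁ ≠ []) :
    l₁.head? = l₂.head? := by
  obtain ⟨t, rfl⟩ := h
  rw [List.head?_append]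
  cases l₁ with
  | nil => exact absurd rfl hne
  | cons a l => rfl

/-- Marked prefix lifting. -/
theorem marked_prefix {g : Ltr → List σ} (hg : Marked g) :
    ∀ (u u' : List Ltr), mapp g u <+: mapp g u' → u <+: u' := by
  intro u
  induction u with
  | nil => intro u' _; exact List.nil_prefix
  | cons x t ih =>
    intro u' hpre
    cases u' with
    | nil =>
      rw [mapp_cons] at hpre
      have := List.eq_nil_of_prefix_nil hpre
      rw [List.append_eq_nil_iff] at this
      exact absurd this.1 (hg.ne_nil x)
    | cons y t' =>
      rw [mapp_cons, mapp_cons] at hpre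
      by_cases hxy : x = y
      · subst hxy
        rw [List.prefix_append_right_inj] at hpre
        exact List.cons_prefix_cons.mpr ⟨rfl, ih t' hpre⟩
      · exfalso
        have h1 : (g x ++ mapp g t).head? = (g y ++ mapp g t').head? :=
          prefix_head? hpre (by simp [hg.ne_nil x])
        rw [List.head?_append, List.head?_append] at h1
        cases hx : (g x).head? with
        | none => exact (hg.ne_nil x) (List.head?_eq_none_iff.mp hx)
        | some a =>
          cases hy : (g y).head? with
          | none => exact (hg.ne_nil y) (List.head?_eq_none_iff.mp hy)
          | some b =>
            rw [hx, hy] at h1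
            simp at h1
            exact hg.head_ne hxy (by rw [hx, hy, h1])

theorem marked_inj {g : Ltr → List σ} (hg : Marked g) {u u' : List Ltr}
    (h : mapp g u = mapp g u') : u = u' := by
  have h1 := marked_prefix hg u u' (h ▸ List.prefix_refl _)
  have h2 := marked_prefix hg u' u (h ▸ List.prefix_refl _)
  exact h1.eq_of_length (le_antisymm h1.length_le h2.length_le)

/-- Common prefixes of images of diverging words are prefixes of the image of the
common prefix. -/
theorem marked_div {g : Ltr → List σ} (hg : Marked g) {p s s' : List Ltr} {x y : Ltr}
    (hxy : x ≠ y) (w : List σ)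
    (h1 : w <+: mapp g (p ++ x :: s)) (h2 : w <+: mapp g (p ++ y :: s')) :
    w <+: mapp g p := by
  rw [mapp_append, mapp_cons] at h1 h2
  by_cases hlen : w.length ≤ (mapp g p).length
  · exact List.prefix_of_prefix_length_le h1 (List.prefix_append _ _) hlen
  · exfalso
    push_neg at hlen
    have hp : mapp g p <+: w :=
      List.prefix_of_prefix_length_le (List.prefix_append _ _) h1 hlen.le
    obtain ⟨w', rfl⟩ := hp
    rw [List.prefix_append_right_inj] at h1 h2
    have hw' : w' ≠ [] := by
      rintro rfl; simp at hlen
    have e1 : w'.head? = (g x ++ mapp g s).head? := prefix_head? h1 hw'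
    have e2 : w'.head? = (g y ++ mapp g s').head? := prefix_head? h2 hw'
    rw [List.head?_append] at e1 e2
    apply hg.head_ne hxy
    cases hx : (g x).head? with
    | none => exact absurd (List.head?_eq_none_iff.mp hx) (hg.ne_nil x)
    | some a =>
      cases hy : (g y).head? with
      | none => exact absurd (List.head?_eq_none_iff.mp hy) (hg.ne_nil y)
      | some b =>
        rw [hx] at e1; rw [hy] at e2
        simp at e1 e2
        rw [e1] at e2
        simp [e2]

/-- Longest common prefix decomposition. -/
theorem exists_lcp : ∀ (u u' : List Ltr), ∃ p s s', u = p ++ s ∧ u' = p ++ s' ∧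
    (s = [] ∨ s' = [] ∨ s.head? ≠ s'.head?) := by
  intro u
  induction u with
  | nil => intro u'; exact ⟨[], [], u', rfl, rfl, Or.inl rfl⟩
  | cons x t ih =>
    intro u'
    cases u' with
    | nil => exact ⟨[], x :: t, [], rfl, rfl, Or.inr (Or.inl rfl)⟩
    | cons y t' =>
      by_cases hxy : x = y
      · subst hxy
        obtain ⟨p, s, s', h1, h2, h3⟩ := ih t'
        exact ⟨x :: p, s, s', by rw [h1]; rfl, by rw [h2]; rfl, h3⟩
      · refine ⟨[], x :: t, y :: t', rfl, rfl, Or.inr (Or.inr ?_)⟩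
        simp [hxy]

theorem coin_swap {g h : Ltr → List σ} {p : List Ltr × List Ltr} :
    MinCoin g h p → MinCoin h g (p.2, p.1) := by
  rintro ⟨h1, h2, h3⟩
  refine ⟨?_, h2.symm, ?_⟩
  · intro hc
    apply h1
    rw [Prod.ext_iff] at hc ⊢
    exact ⟨hc.2, hc.1⟩
  · rintro ⟨q, r, hq, hr, hqc, hrc, heq⟩
    apply h3
    refine ⟨(q.2, q.1), (r.2, r.1), ?_, ?_, hqc.symm, hrc.symm, ?_⟩
    · intro hc; apply hq; exact Prod.ext (congrArg Prod.snd hc) (congrArg Prod.fst hc)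
    · intro hc; apply hr; exact Prod.ext (congrArg Prod.snd hc) (congrArg Prod.fst hc)
    · have e1 := congrArg Prod.fst heq
      have e2 := congrArg Prod.snd heq
      exact Prod.ext e2 e1

theorem MinCoin.ne_nil {g h : Ltr → List σ} (hg : Marked g) (hh : Marked h)
    {u v : List Ltr} (hm : MinCoin g h (u, v)) : u ≠ [] ∧ v ≠ [] := by
  obtain ⟨h1, h2, _⟩ := hm
  simp only [CoinSet, Set.mem_setOf_eq] at h2
  constructor
  · rintro rfl
    rw [mapp_nil] at h2
    exact h1 (by rw [mapp_eq_nil hh h2.symm])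
  · rintro rfl
    rw [mapp_nil] at h2
    exact h1 (by rw [mapp_eq_nil hg h2])

end Aux

section Key

variable {σ : Type*}

theorem key_prefix {g h : Ltr → List σ} (hg : Marked g) (hh : Marked h)
    {u v u' v' : List Ltr}
    (h1 : MinCoin g h (u, v)) (h2 : MinCoin g h (u', v'))
    (hpre : u <+: u') : (u, v) = (u', v') := by
  obtain ⟨hu, hv⟩ := h1.ne_nil hg hh
  have hc1 : mapp g u = mapp h v := h1.2.1
  have hc2 : mapp g u' = mapp h v' := h2.2.1
  obtain ⟨s', rfl⟩ := hpre
  have hgpre : mapp g u <+: mapp g (u ++ s') := by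
    rw [mapp_append]; exact List.prefix_append _ _
  have hvpre : v <+: v' := marked_prefix hh v v' (by rw [← hc1, ← hc2]; exact hgpre)
  obtain ⟨t', rfl⟩ := hvpre
  rw [mapp_append, mapp_append, hc1] at hc2
  have hst : mapp g s' = mapp h t' := List.append_cancel_left hc2
  by_cases hs' : s' = []
  · subst hs'
    have ht' : t' = [] := mapp_eq_nil hh (by rw [← hst]; rfl)
    subst ht'
    simp
  · exfalso
    apply h2.2.2
    refine ⟨(u, v), (s', t'), ?_, ?_, hc1, hst, rfl⟩
    · simp [Prod.ext_iff]; intro hc; exact absurd hc hu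
    · simp [Prod.ext_iff]; intro hc; exact absurd hc hs'

theorem key {g h : Ltr → List σ} (hg : Marked g) (hh : Marked h)
    {u v u' v' : List Ltr}
    (h1 : MinCoin g h (u, v)) (h2 : MinCoin g h (u', v'))
    (hhead : u.head? = u'.head?) : (u, v) = (u', v') := by
  obtain ⟨hu, hv⟩ := h1.ne_nil hg hh
  obtain ⟨hu', hv'⟩ := h2.ne_nil hg hh
  have hc1 : mapp g u = mapp h v := h1.2.1
  have hc2 : mapp g u' = mapp h v' := h2.2.1
  obtain ⟨p, s, s', hup, hu'p, hd⟩ := exists_lcp u u'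
  by_cases hs : s = []
  · subst hs
    exact key_prefix hg hh h1 h2 (by rw [hup, hu'p, List.append_nil]; exact List.prefix_append _ _)
  · by_cases hs' : s' = []
    · subst hs'
      exact (key_prefix hg hh h2 h1
        (by rw [hup, hu'p, List.append_nil]; exact List.prefix_append _ _)).symm
    · have hhd : s.head? ≠ s'.head? := by
        rcases hd with hx | hx | hx
        · exact absurd hx hs
        · exact absurd hx hs'
        · exact hx
      obtain ⟨x, ss, rfl⟩ : ∃ x ss, s = x :: ss := by
        cases s with
        | nil => exact absurd rfl hs
        | cons a b => exact ⟨a, b, rfl⟩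
      obtain ⟨y, ss', rfl⟩ : ∃ y ss', s' = y :: ss' := by
        cases s' with
        | nil => exact absurd rfl hs'
        | cons a b => exact ⟨a, b, rfl⟩
      simp only [List.head?_cons, Ne, Option.some.injEq] at hhd
      have hxy : x ≠ y := hhd
      have hp : p ≠ [] := by
        rintro rfl
        rw [hup, hu'p] at hhead
        simp at hhead
        exact hxy hhead
      obtain ⟨q, t, t'', hvq, hv'q, hd2⟩ := exists_lcp v v'
      by_cases ht : t = []
      · exfalso
        subst ht
        rw [List.append_nil] at hvq
        have hhv : mapp h v <+: mapp h v' := by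
          rw [hvq, hv'q, mapp_append]; exact List.prefix_append _ _
        have hpre : u <+: u' := marked_prefix hg u u' (by rw [hc1, hc2]; exact hhv)
        rw [hup, hu'p, List.prefix_append_right_inj] at hpre
        exact hxy (List.cons_prefix_cons.mp hpre).1
      · by_cases ht'' : t'' = []
        · exfalso
          subst ht''
          rw [List.append_nil] at hv'q
          have hhv : mapp h v' <+: mapp h v := by
            rw [hvq, hv'q, mapp_append]; exact List.prefix_append _ _
          have hpre : u' <+: u := marked_prefix hg u' u (by rw [hc1, hc2]; exact hhv)
          rw [hup, hu'p, List.prefix_append_right_inj] at hpre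
          exact hxy (List.cons_prefix_cons.mp hpre).1.symm
        · have hhd2 : t.head? ≠ t''.head? := by
            rcases hd2 with hx | hx | hx
            · exact absurd hx ht
            · exact absurd hx ht''
            · exact hx
          obtain ⟨z, tt, rfl⟩ : ∃ z tt, t = z :: tt := by
            cases t with
            | nil => exact absurd rfl ht
            | cons a b => exact ⟨a, b, rfl⟩
          obtain ⟨z', tt', rfl⟩ : ∃ z' tt', t'' = z' :: tt' := by
            cases t'' with
            | nil => exact absurd rfl ht''
            | cons a b => exact ⟨a, b, rfl⟩
          simp only [List.head?_cons, Ne, Option.some.injEq] at hhd2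
          have hzz' : z ≠ z' := hhd2
          have gp_u : mapp g p <+: mapp g u := by
            rw [hup, mapp_append]; exact List.prefix_append _ _
          have gp_u' : mapp g p <+: mapp g u' := by
            rw [hu'p, mapp_append]; exact List.prefix_append _ _
          have e1 : mapp g p <+: mapp h q := by
            apply marked_div hh hzz' (mapp g p)
            · rw [← hvq, ← hc1]; exact gp_u
            · rw [← hv'q, ← hc2]; exact gp_u'
          have e2 : mapp h q <+: mapp g p := by
            apply marked_div hg hxy (mapp h q)
            · rw [← hup, hc1, hvq, mapp_append]; exact List.prefix_append _ _
            · rw [← hu'p, hc2, hv'q, mapp_append]; exact List.prefix_append _ _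
          have epq : mapp g p = mapp h q :=
            e1.eq_of_length (le_antisymm e1.length_le e2.length_le)
          exfalso
          apply h1.2.2
          refine ⟨(p, q), (x :: ss, z :: tt), ?_, ?_, epq, ?_, ?_⟩
          · simp [Prod.ext_iff]; intro hc; exact absurd hc hp
          · simp [Prod.ext_iff]
          · show mapp g (x :: ss) = mapp h (z :: tt)
            have hcc := hc1
            rw [hup, hvq, mapp_append, mapp_append, epq] at hcc
            exact List.append_cancel_left hcc
          · show (u, v) = (p ++ x :: ss, q ++ z :: tt)
            rw [Prod.ext_iff]; exact ⟨hup, hvq⟩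

end Key

section Decomp

variable {σ : Type*}

theorem pprod_assoc {α : Type*} (a b c : List α × List α) :
    pprod (pprod a b) c = pprod a (pprod b c) := by
  simp [pprod, List.append_assoc]

theorem foldr_pprod {α : Type*} :
    ∀ (l : List (List α × List α)) (c : List α × List α),
      l.foldr pprod c = pprod (l.foldr pprod ([], [])) c := by
  intro l
  induction l with
  | nil => intro c; simp [pprod]
  | cons a l ih =>
    intro c
    rw [List.foldr_cons, ih c, ← pprod_assoc, List.foldr_cons]

theorem sum_pos_of_ne {α : Type*} {p : List α × List α} (h : p ≠ ([], [])) :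
    1 ≤ p.1.length + p.2.length := by
  by_contra hc
  push_neg at hc
  apply h
  have h1 : p.1 = [] := List.length_eq_zero_iff.mp (by omega)
  have h2 : p.2 = [] := List.length_eq_zero_iff.mp (by omega)
  rw [Prod.ext_iff]
  exact ⟨h1, h2⟩

theorem coin_decomp {g h : Ltr → List σ} :
    ∀ (n : ℕ) (p : List Ltr × List Ltr), p.1.length + p.2.length ≤ n →
      p ∈ CoinSet g h →
      ∃ l : List (List Ltr × List Ltr), (∀ q ∈ l, MinCoin g h q) ∧
        p = l.foldr pprod ([], []) := by
  intro n
  induction n with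
  | zero =>
    intro p hlen _
    have h1 : p.1 = [] := List.length_eq_zero_iff.mp (by omega)
    have h2 : p.2 = [] := List.length_eq_zero_iff.mp (by omega)
    exact ⟨[], by simp, by rw [Prod.ext_iff]; exact ⟨h1, h2⟩⟩
  | succ n ih =>
    intro p hlen hp
    by_cases hnil : p = ([], [])
    · exact ⟨[], by simp, by simp [hnil]⟩
    · by_cases hmin : MinCoin g h p
      · exact ⟨[p], by simp [hmin], by simp [pprod]⟩
      · have hdec : ∃ q r : List Ltr × List Ltr, q ≠ ([], []) ∧ r ≠ ([], []) ∧
            q ∈ CoinSet g h ∧ r ∈ CoinSet g h ∧ p = pprod q r := by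
          by_contra hc
          exact hmin ⟨hnil, hp, hc⟩
        obtain ⟨q, r, hq, hr, hqc, hrc, rfl⟩ := hdec
        have hqpos := sum_pos_of_ne hq
        have hrpos := sum_pos_of_ne hr
        simp only [pprod, List.length_append] at hlen
        obtain ⟨l₁, hl₁, hfq⟩ := ih q (by omega) hqc
        obtain ⟨l₂, hl₂, hfr⟩ := ih r (by omega) hrc
        refine ⟨l₁ ++ l₂, ?_, ?_⟩
        · intro x hx
          rcases List.mem_append.mp hx with hm | hm
          · exact hl₁ x hm
          · exact hl₂ x hm
        · rw [List.foldr_append, foldr_pprod l₁ _, ← hfq, ← hfr]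

theorem map_flat {e f e' f' : List Ltr} (hne : (e, f) ≠ (e', f')) :
    ∀ l : List (List Ltr × List Ltr), (∀ q ∈ l, q = (e, f) ∨ q = (e', f')) →
      mapp (two e e') (l.map (fun q => if q = (e, f) then Ltr.a else Ltr.b)) =
        (l.foldr pprod ([], [])).1 ∧
      mapp (two f f') (l.map (fun q => if q = (e, f) then Ltr.a else Ltr.b)) =
        (l.foldr pprod ([], [])).2 := by
  intro l
  induction l with
  | nil => intro _; exact ⟨rfl, rfl⟩
  | cons q l ih =>
    intro hall
    obtain ⟨ih1, ih2⟩ := ih (fun x hx => hall x (List.mem_cons_of_mem _ hx))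
    rcases hall q (List.mem_cons_self) with rfl | rfl
    · constructor
      · rw [List.map_cons, if_pos rfl, mapp_cons, ih1, List.foldr_cons]
        rfl
      · rw [List.map_cons, if_pos rfl, mapp_cons, ih2, List.foldr_cons]
        rfl
    · have hneq : ((e', f') : List Ltr × List Ltr) ≠ (e, f) := fun hc => hne hc.symm
      constructor
      · rw [List.map_cons, if_neg hneq, mapp_cons, ih1, List.foldr_cons]
        rfl
      · rw [List.map_cons, if_neg hneq, mapp_cons, ih2, List.foldr_cons]
        rfl

end Decomp

/-- Successor morphisms of a marked pair with two blocks are marked, and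
every element of `E(g,h)` lifts uniquely through them. -/
theorem stmt_14 {σ : Type*} (g h : Ltr → List σ) (hg : Marked g) (hh : Marked h)
    (e f e' f' : List Ltr)
    (hmin : {p : List Ltr × List Ltr | MinCoin g h p} = {(e, f), (e', f')})
    (hne : (e, f) ≠ (e', f')) :
    Marked (two e e') ∧ Marked (two f f') ∧
    ∀ w ∈ EqSet g h, ∃! w₁ : List Ltr,
      mapp (two e e') w₁ = w ∧ mapp (two f f') w₁ = w := by
  have hmem : ∀ p : List Ltr × List Ltr, MinCoin g h p ↔ (p = (e, f) ∨ p = (e', f')) := by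
    intro p
    have := Set.ext_iff.mp hmin p
    simpa using this
  have hef : MinCoin g h (e, f) := (hmem _).mpr (Or.inl rfl)
  have hef' : MinCoin g h (e', f') := (hmem _).mpr (Or.inr rfl)
  obtain ⟨he, hf⟩ := hef.ne_nil hg hh
  obtain ⟨he', hf'⟩ := hef'.ne_nil hg hh
  have hheadE : e.head? ≠ e'.head? := fun hc => hne (key hg hh hef hef' hc)
  have hheadF : f.head? ≠ f'.head? := by
    intro hc
    apply hne
    have hkey := key hh hg (coin_swap hef) (coin_swap hef') hc
    rw [Prod.ext_iff] at hkey ⊢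
    exact ⟨hkey.2, hkey.1⟩
  have hm1 : Marked (two e e') := ⟨he, he', hheadE⟩
  have hm2 : Marked (two f f') := ⟨hf, hf', hheadF⟩
  refine ⟨hm1, hm2, ?_⟩
  intro w hw
  have hww : (w, w) ∈ CoinSet g h := hw
  obtain ⟨l, hl, hfold⟩ := coin_decomp (w.length + w.length) (w, w) le_rfl hww
  have hall : ∀ q ∈ l, q = (e, f) ∨ q = (e', f') := fun q hq => (hmem q).mp (hl q hq)
  obtain ⟨m1, m2⟩ := map_flat hne l hall
  refine ⟨l.map (fun q => if q = (e, f) then Ltr.a else Ltr.b), ⟨?_, ?_⟩, ?_⟩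
  · rw [m1, ← hfold]
  · rw [m2, ← hfold]
  · intro y hy
    apply marked_inj hm1
    rw [hy.1, m1, ← hfold]
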